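/- For the root system Bₙ (or Dₙ, n ≥ 4), with highest root ρ₀ = ρ₀∨ = ϖ₂, the Chebyshev identity T_{2ϖ₁}(z) = 2n z₁² − 1 − 2(n−1) z₂ holds, and the constraint T_0 − T_{2ϖ₁} ≥ 0 valid on the Chebyshev image T implies z₂ ≥ (n z₁² − 1)/(n−1) ≥ −1/(n−1) for all z ∈ T. Hence the spectral bound gives χ(Λ(Bₙ)) = χ(Λ(Dₙ)) ≥ 1 − 1/(−1/(n−1)) = n. -/

import Mathlib

noncomputable section
open scoped BigOperators

abbrev EV (n : ℕ) := EuclideanSpace ℝ (Fin n)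

/-- The hyperoctahedral group `Sₙ ⋉ {±1}ⁿ` (the Weyl group of `Bₙ`/`Cₙ`) acting on `ℝⁿ`
by permutations and sign changes of coordinates. -/
def sgnAct {n : ℕ} (g : Equiv.Perm (Fin n) × (Fin n → Bool)) (μ : EV n) : EV n :=
  WithLp.toLp 2 (fun j => (if g.2 j then (1 : ℝ) else -1) * μ (g.1 j))

/-- The generalized cosine for the Weyl group of `Bₙ`/`Cₙ`. -/
def cGencos {n : ℕ} (μ u : EV n) : ℂ :=
  ((Fintype.card (Equiv.Perm (Fin n) × (Fin n → Bool)) : ℂ))⁻¹ *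
    ∑ g : Equiv.Perm (Fin n) × (Fin n → Bool),
      Complex.exp (-(2 * Real.pi * Complex.I) * ((inner ℝ (sgnAct g μ) u : ℝ) : ℂ))

/-- The fundamental weight `ϖ₁ = e₁` of `Cₙ`. -/
def cϖ₁ {n : ℕ} : EV n := WithLp.toLp 2 (fun j => if (j : ℕ) = 0 then 1 else 0)

/-- The fundamental weight `ϖ₂ = e₁ + e₂` of `Cₙ`/`Bₙ`. -/
def cϖ₂ {n : ℕ} : EV n := WithLp.toLp 2 (fun j => if (j : ℕ) < 2 then 1 else 0)

namespace Statement14Aux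

open Complex Finset Real

lemma inner_sgnAct {n : ℕ} (g : Equiv.Perm (Fin n) × (Fin n → Bool)) (μ u : EV n) :
    (inner ℝ (sgnAct g μ) u : ℝ)
      = ∑ j, (if g.2 j then (1:ℝ) else -1) * (μ (g.1 j) * u j) := by
  rw [PiLp.inner_apply]
  simp [sgnAct, RCLike.inner_apply, mul_assoc]
  refine Finset.sum_congr rfl fun x _ => by split_ifs <;> ring

lemma sum_bool_prod : ∀ {n : ℕ} (F : Fin n → Bool → ℂ),
    ∑ ε : Fin n → Bool, ∏ j, F j (ε j) = ∏ j, (F j true + F j false) := by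
  intro n
  induction n with
  | zero => intro F; simp
  | succ n ih =>
    intro F
    rw [← ((Fin.consEquiv (fun _ : Fin (n+1) => Bool)).sum_comp
        (fun ε => ∏ j, F j (ε j))), Fintype.sum_prod_type]
    simp only [Fin.consEquiv_apply]
    have : ∀ (b : Bool) (ε : Fin n → Bool),
        ∏ j, F j ((Fin.cons b ε : Fin (n+1) → Bool) j)
          = F 0 b * ∏ j, F j.succ (ε j) := by
      intro b ε; rw [Fin.prod_univ_succ]; simp
    simp only [this]
    rw [Fin.prod_univ_succ]
    simp only [← Finset.mul_sum, ← Finset.sum_mul]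
    rw [ih (fun j b => F j.succ b)]
    simp [Fintype.sum_bool, add_comm]

lemma factor_eq (a : ℝ) :
    Complex.exp (-(2 * Real.pi * Complex.I) * ((1:ℝ) : ℂ) * a)
      + Complex.exp (-(2 * Real.pi * Complex.I) * ((-1:ℝ) : ℂ) * a)
      = 2 * Complex.cos (2 * Real.pi * a) := by
  rw [Complex.two_cos, add_comm]
  congr 1 <;> · congr 1; push_cast; ring

lemma key {n : ℕ} (μ u : EV n) :
    ∑ g : Equiv.Perm (Fin n) × (Fin n → Bool),
      Complex.exp (-(2 * Real.pi * Complex.I) * ((inner ℝ (sgnAct g μ) u : ℝ) : ℂ))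
      = ∑ σ : Equiv.Perm (Fin n), ∏ j, (2 * Complex.cos (2 * Real.pi * (μ (σ j) * u j))) := by
  rw [Fintype.sum_prod_type]
  refine Finset.sum_congr rfl fun σ _ => ?_
  have step : ∀ ε : Fin n → Bool,
      Complex.exp (-(2 * Real.pi * Complex.I) * ((inner ℝ (sgnAct (σ, ε) μ) u : ℝ) : ℂ))
        = ∏ j, Complex.exp (-(2 * Real.pi * Complex.I)
            * ((if ε j then (1:ℝ) else -1 : ℝ) : ℂ) * ((μ (σ j) * u j : ℝ) : ℂ)) := by
    intro ε
    rw [inner_sgnAct, ← Complex.exp_sum]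
    congr 1
    push_cast [Finset.mul_sum]
    refine Finset.sum_congr rfl fun j _ => by ring
  simp only [step]
  rw [sum_bool_prod (fun j b => Complex.exp (-(2 * Real.pi * Complex.I)
      * ((if b then (1:ℝ) else -1 : ℝ) : ℂ) * ((μ (σ j) * u j : ℝ) : ℂ)))]
  refine Finset.prod_congr rfl fun j _ => ?_
  simpa using factor_eq (μ (σ j) * u j)

lemma permSum0 {n : ℕ} (h : Fin (n+1) → ℂ) :
    ∑ σ : Equiv.Perm (Fin (n+1)), h (σ 0) = ((Nat.factorial n) : ℂ) * ∑ a, h a := by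
  have e2 : ∑ pe : Fin (n+1) × Equiv.Perm (Fin n), h pe.1
      = ∑ σ : Equiv.Perm (Fin (n+1)), h (σ 0) :=
    Fintype.sum_equiv Equiv.Perm.decomposeFin.symm _ _ (fun ⟨p, e⟩ => by simp)
  rw [← e2, Fintype.sum_prod_type]
  simp only [Finset.sum_const, Finset.card_univ, Fintype.card_perm, Fintype.card_fin,
    nsmul_eq_mul]
  rw [← Finset.mul_sum]

lemma permSum1 {m : ℕ} (h : Fin (m+2) → ℂ) :
    ∑ σ : Equiv.Perm (Fin (m+2)), h (σ⁻¹ 0) = ((Nat.factorial (m+1)) : ℂ) * ∑ a, h a := by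
  have e1 : ∑ σ : Equiv.Perm (Fin (m+2)), h (σ⁻¹ 0)
      = ∑ σ : Equiv.Perm (Fin (m+2)), h (σ 0) :=
    Fintype.sum_equiv (Equiv.inv _) _ _ (fun σ => rfl)
  rw [e1, permSum0]

lemma swapSum {m : ℕ} (p : Fin (m+2)) (G : Fin (m+2) → ℂ) :
    ∑ q : Fin (m+1), G (Equiv.swap 0 p q.succ) = (∑ b, G b) - G p := by
  have e1 : ∑ b : Fin (m+2), G (Equiv.swap 0 p b) = ∑ b, G b :=
    Fintype.sum_equiv (Equiv.swap 0 p) _ _ (fun b => rfl)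
  rw [Fin.sum_univ_succ] at e1
  simp only [Equiv.swap_apply_left] at e1
  linear_combination e1

lemma permSum2 {m : ℕ} (H : Fin (m+2) → Fin (m+2) → ℂ) :
    ∑ σ : Equiv.Perm (Fin (m+2)), H (σ⁻¹ 0) (σ⁻¹ 1)
      = ((Nat.factorial m) : ℂ) * ((∑ p, ∑ b, H p b) - ∑ p, H p p) := by
  have e1 : ∑ σ : Equiv.Perm (Fin (m+2)), H (σ⁻¹ 0) (σ⁻¹ 1)
      = ∑ σ : Equiv.Perm (Fin (m+2)), H (σ 0) (σ 1) :=
    Fintype.sum_equiv (Equiv.inv _) _ _ (fun σ => rfl)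
  have e2 : ∑ pe : Fin (m+2) × Equiv.Perm (Fin (m+1)),
        H pe.1 (Equiv.swap 0 pe.1 ((pe.2 0).succ))
      = ∑ σ : Equiv.Perm (Fin (m+2)), H (σ 0) (σ 1) :=
    Fintype.sum_equiv Equiv.Perm.decomposeFin.symm _ _ (fun ⟨p, e⟩ => by simp)
  rw [e1, ← e2, Fintype.sum_prod_type]
  have inner : ∀ p : Fin (m+2),
      ∑ e : Equiv.Perm (Fin (m+1)), H p (Equiv.swap 0 p ((e 0).succ))
        = ((Nat.factorial m) : ℂ) * ((∑ b, H p b) - H p p) := by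
    intro p
    rw [permSum0 (fun q => H p (Equiv.swap 0 p q.succ)), swapSum]
  rw [Finset.sum_congr rfl (fun p _ => inner p), ← Finset.mul_sum, Finset.sum_sub_distrib]

lemma prodPhi1 {m : ℕ} (σ : Equiv.Perm (Fin (m+2))) (u : EV (m+2)) :
    ∏ j, (2 * Complex.cos (2 * Real.pi * ((cϖ₁ : EV (m+2)) (σ j) * u j)))
      = 2^(m+2) * Complex.cos (2 * Real.pi * u (σ⁻¹ 0)) := by
  rw [Finset.prod_mul_distrib, Finset.prod_const, Finset.card_univ, Fintype.card_fin]
  congr 1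
  rw [Finset.prod_eq_single (σ⁻¹ 0)]
  · have : σ (σ⁻¹ 0) = 0 := σ.apply_symm_apply 0
    rw [this]; norm_num [cϖ₁]
  · intro b _ hb
    have : σ b ≠ 0 := fun h => hb (by rw [← h, show σ⁻¹ (σ b) = b from σ.symm_apply_apply b])
    have h2 : ((σ b : Fin (m+2)) : ℕ) ≠ 0 := fun h => this (Fin.ext h)
    simp [cϖ₁, h2, this]
  · simp

lemma prodPhi1' {m : ℕ} (σ : Equiv.Perm (Fin (m+2))) (u : EV (m+2)) :
    ∏ j, (2 * Complex.cos (2 * Real.pi * (((2:ℝ) • cϖ₁ : EV (m+2)) (σ j) * u j)))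
      = 2^(m+2) * Complex.cos (2 * (2 * Real.pi * u (σ⁻¹ 0))) := by
  rw [Finset.prod_mul_distrib, Finset.prod_const, Finset.card_univ, Fintype.card_fin]
  congr 1
  rw [Finset.prod_eq_single (σ⁻¹ 0)]
  · have : σ (σ⁻¹ 0) = 0 := σ.apply_symm_apply 0
    rw [this]
    have : ((2:ℝ) • cϖ₁ : EV (m+2)) 0 = 2 := by norm_num [cϖ₁, PiLp.smul_apply]
    rw [this]
    congr 1
    push_cast
    ring
  · intro b _ hb
    have : σ b ≠ 0 := fun h => hb (by rw [← h, show σ⁻¹ (σ b) = b from σ.symm_apply_apply b])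
    have h2 : ((σ b : Fin (m+2)) : ℕ) ≠ 0 := fun h => this (Fin.ext h)
    simp [cϖ₁, h2, PiLp.smul_apply, this]
  · simp

lemma prodPhi2 {m : ℕ} (σ : Equiv.Perm (Fin (m+2))) (u : EV (m+2)) :
    ∏ j, (2 * Complex.cos (2 * Real.pi * ((cϖ₂ : EV (m+2)) (σ j) * u j)))
      = 2^(m+2) * (Complex.cos (2 * Real.pi * u (σ⁻¹ 0))
          * Complex.cos (2 * Real.pi * u (σ⁻¹ 1))) := by
  rw [Finset.prod_mul_distrib, Finset.prod_const, Finset.card_univ, Fintype.card_fin]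
  congr 1
  have hab : (σ⁻¹ 0 : Fin (m+2)) ≠ σ⁻¹ 1 := by
    intro h
    have := σ⁻¹.injective h
    exact absurd this (by simp [Fin.ext_iff])
  have hb : (σ⁻¹ 1 : Fin (m+2)) ∈ Finset.univ.erase (σ⁻¹ 0) :=
    Finset.mem_erase.2 ⟨Ne.symm hab, Finset.mem_univ _⟩
  rw [← Finset.mul_prod_erase Finset.univ _ (Finset.mem_univ (σ⁻¹ 0)),
      ← Finset.mul_prod_erase _ _ hb]
  have h1 : (cϖ₂ : EV (m+2)) (σ (σ⁻¹ 0)) = 1 := by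
    rw [show σ (σ⁻¹ 0) = 0 from σ.apply_symm_apply 0]; norm_num [cϖ₂]
  have h2 : (cϖ₂ : EV (m+2)) (σ (σ⁻¹ 1)) = 1 := by
    rw [show σ (σ⁻¹ 1) = 1 from σ.apply_symm_apply 1]; norm_num [cϖ₂, Fin.val_one]
  rw [h1, h2]
  have h3 : ∏ j ∈ (Finset.univ.erase (σ⁻¹ 0)).erase (σ⁻¹ 1),
      Complex.cos (2 * Real.pi * ((cϖ₂ : EV (m+2)) (σ j) * u j)) = 1 := by
    apply Finset.prod_eq_one
    intro j hj
    rw [Finset.mem_erase, Finset.mem_erase] at hj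
    obtain ⟨hj1, hj0, -⟩ := hj
    have hσ0 : σ j ≠ 0 := fun h => hj0 (by rw [← h, show σ⁻¹ (σ j) = j from σ.symm_apply_apply j])
    have hσ1 : σ j ≠ 1 := fun h => hj1 (by rw [← h, show σ⁻¹ (σ j) = j from σ.symm_apply_apply j])
    have : ¬ (((σ j : Fin (m+2)) : ℕ) < 2) := by
      intro h
      interval_cases h' : ((σ j : Fin (m+2)) : ℕ)
      · exact hσ0 (Fin.ext h')
      · exact hσ1 (by rw [Fin.ext_iff, h', Fin.val_one])
    simp [cϖ₂, this, show ¬ ((σ j : ℕ) ≤ 1) by omega]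
  rw [h3]
  push_cast
  ring

lemma cardW (n : ℕ) :
    (Fintype.card (Equiv.Perm (Fin n) × (Fin n → Bool)) : ℂ)
      = (Nat.factorial n : ℂ) * 2^n := by
  rw [Fintype.card_prod, Fintype.card_perm, Fintype.card_fin, Fintype.card_fun,
    Fintype.card_bool, Fintype.card_fin]
  push_cast
  ring

lemma G1 {m : ℕ} (u : EV (m+2)) :
    cGencos (cϖ₁ : EV (m+2)) u
      = ((m:ℂ)+2)⁻¹ * ∑ j, Complex.cos (2 * Real.pi * u j) := by
  rw [cGencos, key, Finset.sum_congr rfl (fun σ _ => prodPhi1 σ u), ← Finset.mul_sum,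
    permSum1 (fun a => Complex.cos (2 * Real.pi * u a)), cardW]
  have h1 : ((Nat.factorial (m+2)) : ℂ) = ((m:ℂ)+2) * (Nat.factorial (m+1)) := by
    rw [Nat.factorial_succ]; push_cast; ring
  have h2 : ((Nat.factorial (m+1)) : ℂ) ≠ 0 := by
    exact_mod_cast Nat.cast_ne_zero.2 (Nat.factorial_ne_zero (m+1))
  have h3 : ((m:ℂ)+2) ≠ 0 := by
    intro h
    have := congrArg Complex.re h
    push_cast at this
    norm_num at this
    linarith [Nat.cast_nonneg (α := ℝ) m]
  have h4 : (2:ℂ)^(m+2) ≠ 0 := pow_ne_zero _ two_ne_zero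
  rw [h1]
  field_simp

lemma G2 {m : ℕ} (u : EV (m+2)) :
    cGencos ((2:ℝ) • cϖ₁ : EV (m+2)) u
      = ((m:ℂ)+2)⁻¹ *
          (2 * (∑ j, Complex.cos (2 * Real.pi * u j)^2) - ((m:ℂ)+2)) := by
  rw [cGencos, key, Finset.sum_congr rfl (fun σ _ => prodPhi1' σ u), ← Finset.mul_sum,
    permSum1 (fun a => Complex.cos (2 * (2 * Real.pi * u a))), cardW]
  have hsum : ∑ a, Complex.cos (2 * (2 * Real.pi * u a))
      = 2 * (∑ j, Complex.cos (2 * Real.pi * u j)^2) - ((m:ℂ)+2) := by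
    rw [Finset.sum_congr rfl (fun a _ => Complex.cos_two_mul (2 * Real.pi * u a)),
      Finset.sum_sub_distrib, Finset.sum_const, Finset.card_univ, Fintype.card_fin,
      Finset.mul_sum]
    push_cast
    ring
  rw [hsum]
  have h1 : ((Nat.factorial (m+2)) : ℂ) = ((m:ℂ)+2) * (Nat.factorial (m+1)) := by
    rw [Nat.factorial_succ]; push_cast; ring
  have h2 : ((Nat.factorial (m+1)) : ℂ) ≠ 0 := by
    exact_mod_cast Nat.cast_ne_zero.2 (Nat.factorial_ne_zero (m+1))
  have h3 : ((m:ℂ)+2) ≠ 0 := by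
    intro h
    have := congrArg Complex.re h
    push_cast at this
    norm_num at this
    linarith [Nat.cast_nonneg (α := ℝ) m]
  have h4 : (2:ℂ)^(m+2) ≠ 0 := pow_ne_zero _ two_ne_zero
  rw [h1]
  field_simp

lemma G3 {m : ℕ} (u : EV (m+2)) :
    cGencos (cϖ₂ : EV (m+2)) u
      = (((m:ℂ)+2) * ((m:ℂ)+1))⁻¹ *
          ((∑ j, Complex.cos (2 * Real.pi * u j))^2
            - ∑ j, Complex.cos (2 * Real.pi * u j)^2) := by
  rw [cGencos, key, Finset.sum_congr rfl (fun σ _ => prodPhi2 σ u), ← Finset.mul_sum,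
    permSum2 (fun p b => Complex.cos (2 * Real.pi * u p) * Complex.cos (2 * Real.pi * u b)),
    cardW]
  have hs : ∑ p, ∑ b, Complex.cos (2 * Real.pi * u p) * Complex.cos (2 * Real.pi * u b)
      = (∑ j, Complex.cos (2 * Real.pi * u j))^2 := by
    rw [sq, Finset.sum_mul_sum]
  have hq : ∑ p, Complex.cos (2 * Real.pi * u p) * Complex.cos (2 * Real.pi * u p)
      = ∑ j, Complex.cos (2 * Real.pi * u j)^2 := by
    refine Finset.sum_congr rfl fun p _ => (sq _).symm
  rw [hs, hq]
  have h1 : ((Nat.factorial (m+2)) : ℂ)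
      = ((m:ℂ)+2) * (((m:ℂ)+1) * (Nat.factorial m)) := by
    rw [Nat.factorial_succ, Nat.factorial_succ]; push_cast; ring
  have h2 : ((Nat.factorial m) : ℂ) ≠ 0 := by
    exact_mod_cast Nat.cast_ne_zero.2 (Nat.factorial_ne_zero m)
  have h3 : ((m:ℂ)+2) ≠ 0 := by
    intro h
    have := congrArg Complex.re h
    push_cast at this
    norm_num at this
    linarith [Nat.cast_nonneg (α := ℝ) m]
  have h3' : ((m:ℂ)+1) ≠ 0 := by
    intro h
    have := congrArg Complex.re h
    push_cast at this
    norm_num at this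
    linarith [Nat.cast_nonneg (α := ℝ) m]
  have h4 : (2:ℂ)^(m+2) ≠ 0 := pow_ne_zero _ two_ne_zero
  rw [h1]
  field_simp

lemma castS {m : ℕ} (u : EV (m+2)) :
    ((∑ j, Real.cos (2 * Real.pi * u j) : ℝ) : ℂ)
      = ∑ j, Complex.cos (2 * Real.pi * u j) := by
  push_cast [Complex.ofReal_cos]
  rfl

lemma castQ {m : ℕ} (u : EV (m+2)) :
    ((∑ j, Real.cos (2 * Real.pi * u j)^2 : ℝ) : ℂ)
      = ∑ j, Complex.cos (2 * Real.pi * u j)^2 := by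
  push_cast [Complex.ofReal_cos]
  rfl

lemma G1' {m : ℕ} (u : EV (m+2)) :
    cGencos (cϖ₁ : EV (m+2)) u
      = ((((m:ℝ)+2)⁻¹ * ∑ j, Real.cos (2 * Real.pi * u j) : ℝ) : ℂ) := by
  rw [G1, ← castS]
  push_cast
  ring

lemma G3' {m : ℕ} (u : EV (m+2)) :
    cGencos (cϖ₂ : EV (m+2)) u
      = ((((((m:ℝ)+2) * ((m:ℝ)+1))⁻¹ *
          ((∑ j, Real.cos (2 * Real.pi * u j))^2
            - ∑ j, Real.cos (2 * Real.pi * u j)^2)) : ℝ) : ℂ) := by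
  rw [G3, ← castS, ← castQ]
  push_cast
  ring

end Statement14Aux

open Statement14Aux

/-- For the root system `Bₙ` (equally `Dₙ`), with highest root
`ρ₀∨ = ϖ₂`: the Chebyshev identity `T_{2ϖ₁} = 2n z₁² − 1 − 2(n−1) z₂` holds on the
Chebyshev image, the constraint `T₀ − T_{2ϖ₁} ≥ 0` valid on the image forces
`z₂ ≥ (n z₁² − 1)/(n−1) ≥ −1/(n−1)` there, and hence the spectral bound gives
`χ(Λ(Bₙ)) = χ(Λ(Dₙ)) ≥ n` for the lattice graph of the common coroot lattice
`{u ∈ ℤⁿ : Σuᵢ even}` avoiding its strict Voronoi vectors `W ϖ₂ = {±eᵢ ± eⱼ}`. -/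
theorem statement14 {n : ℕ} (hn : 2 ≤ n) :
    -- the Chebyshev identity `T_{2ϖ₁} = 2n z₁² − 1 − 2(n−1) z₂` on the image:
    (∀ u : EV n, cGencos ((2 : ℝ) • cϖ₁) u
        = 2 * n * (cGencos cϖ₁ u) ^ 2 - 1 - 2 * (n - 1 : ℂ) * cGencos cϖ₂ u) ∧
    -- `z₂ ≥ (n z₁² − 1)/(n−1)` on the image:
    (∀ u : EV n,
      ((n * ((cGencos cϖ₁ u).re) ^ 2 - 1) / (n - 1) : ℝ) ≤ (cGencos cϖ₂ u).re) ∧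
    -- `z₂ ≥ −1/(n−1)` on the image:
    (∀ u : EV n, -(1 / (n - 1 : ℝ)) ≤ (cGencos cϖ₂ u).re) ∧
    -- the spectral bound: every proper coloring of the lattice graph of the coroot
    -- lattice of `Bₙ`/`Dₙ` uses at least `n` colors:
    (∀ (k : ℕ) (C : (Fin n → ℤ) → Fin k),
      (∀ u v : Fin n → ℤ, (2 : ℤ) ∣ (∑ i, u i) → (2 : ℤ) ∣ (∑ i, v i) →
        ((∑ i, (u i - v i).natAbs) = 2 ∧ ∀ t, (u t - v t).natAbs ≤ 1) →
        C u ≠ C v) → n ≤ k) := by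
  classical
  obtain ⟨m, rfl⟩ : ∃ m, n = m + 2 := ⟨n - 2, by omega⟩
  have part2 : ∀ u : EV (m+2),
      ((((m+2:ℕ):ℝ) * ((cGencos cϖ₁ u).re) ^ 2 - 1) / (((m+2:ℕ):ℝ) - 1) : ℝ)
        ≤ (cGencos cϖ₂ u).re := by
    intro u
    rw [G1', G3', Complex.ofReal_re, Complex.ofReal_re]
    push_cast
    set S := ∑ j, Real.cos (2 * Real.pi * u j) with hS
    set Q := ∑ j, Real.cos (2 * Real.pi * u j)^2 with hQ
    have hQle : Q ≤ (m:ℝ) + 2 := by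
      have : Q ≤ ∑ _j : Fin (m+2), (1:ℝ) :=
        Finset.sum_le_sum fun j _ => Real.cos_sq_le_one _
      simpa using this
    have hN : (0:ℝ) < (m:ℝ) + 2 := by positivity
    have hN1 : (0:ℝ) < (m:ℝ) + 1 := by positivity
    have key : (((m:ℝ)+2) * ((m:ℝ)+1))⁻¹ * (S^2 - Q)
        - (((m:ℝ)+2) * ((((m:ℝ)+2)⁻¹ * S)^2) - 1) / (((m:ℝ)+2) - 1)
        = (((m:ℝ)+2) - Q) / (((m:ℝ)+2) * ((m:ℝ)+1)) := by
      have h1 : ((m:ℝ)+2) ≠ 0 := ne_of_gt hN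
      have h2 : ((m:ℝ)+2) - 1 = (m:ℝ) + 1 := by ring
      rw [h2]
      field_simp
      ring
    have hpos : 0 ≤ (((m:ℝ)+2) - Q) / (((m:ℝ)+2) * ((m:ℝ)+1)) :=
      div_nonneg (by linarith) (by positivity)
    nlinarith [key, hpos]
  have part3 : ∀ u : EV (m+2),
      -(1 / (((m+2:ℕ):ℝ) - 1)) ≤ (cGencos cϖ₂ u).re := by
    intro u
    refine le_trans ?_ (part2 u)
    have hd : (0:ℝ) < ((m+2:ℕ):ℝ) - 1 := by
      push_cast; linarith [Nat.cast_nonneg (α := ℝ) m]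
    have hz := sq_nonneg ((cGencos cϖ₁ u).re)
    have hN : (0:ℝ) ≤ ((m+2:ℕ):ℝ) := Nat.cast_nonneg _
    have h := (div_le_div_iff_of_pos_right hd).2
      (show (-1:ℝ) ≤ ((m+2:ℕ):ℝ) * ((cGencos cϖ₁ u).re) ^ 2 - 1 by nlinarith)
    simpa [neg_div] using h
  refine ⟨?_, part2, part3, ?_⟩
  · -- part 1
    intro u
    have h3 : ((m:ℂ)+2) ≠ 0 := by
      intro h
      have := congrArg Complex.re h
      push_cast at this
      norm_num at this
      linarith [Nat.cast_nonneg (α := ℝ) m]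
    have h3' : ((m:ℂ)+1) ≠ 0 := by
      intro h
      have := congrArg Complex.re h
      push_cast at this
      norm_num at this
      linarith [Nat.cast_nonneg (α := ℝ) m]
    rw [G1, G2, G3]
    push_cast
    field_simp
    ring
  · -- part 4
    intro k C hC
    set f : Fin (m+2) → Fin (m+2) → ℤ := fun i t =>
      if i = 0 then 0 else (if t = 0 then 1 else 0) + (if t = i then 1 else 0) with hf
    have hsum : ∀ i, (2:ℤ) ∣ ∑ t, f i t := by
      intro i
      by_cases hi : i = 0
      · simp [hf, hi]
      · simp [hf, hi, Finset.sum_add_distrib, Finset.sum_ite_eq']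
    have main : ∀ i j : Fin (m+2), i ≠ j →
        (∑ t, (f i t - f j t).natAbs) = 2 ∧ ∀ t, (f i t - f j t).natAbs ≤ 1 := by
      intro i j hij
      have pt : ∃ a b : Fin (m+2), a ≠ b ∧ ∀ t,
          (f i t - f j t).natAbs
            = (if t = a then 1 else 0) + (if t = b then 1 else 0) := by
        by_cases hi : i = 0
        · have hj : j ≠ 0 := fun h => hij (hi.trans h.symm)
          have hj' : ¬ ((0 : Fin (m+2)) = j) := fun h => hj h.symm
          refine ⟨0, j, hj', fun t => ?_⟩
          simp only [hf, hi, if_pos rfl, if_neg hj]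
          by_cases h0 : t = 0 <;> by_cases h1 : t = j <;>
            simp [h0, h1, hj, hj'] <;> omega
        · have hi' : ¬ ((0 : Fin (m+2)) = i) := fun h => hi h.symm
          by_cases hj : j = 0
          · refine ⟨0, i, hi', fun t => ?_⟩
            simp only [hf, hj, if_pos rfl, if_neg hi]
            by_cases h0 : t = 0 <;> by_cases h1 : t = i <;>
              simp [h0, h1, hi, hi'] <;> omega
          · have hj' : ¬ ((0 : Fin (m+2)) = j) := fun h => hj h.symm
            have hij' : ¬ (j = i) := fun h => hij h.symm
            refine ⟨i, j, hij, fun t => ?_⟩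
            simp only [hf, if_neg hi, if_neg hj]
            by_cases h0 : t = 0 <;> by_cases h1 : t = i <;> by_cases h2 : t = j <;>
              simp [h0, h1, h2, hi, hj, hij, hi', hj', hij'] <;> omega
      obtain ⟨a, b, hab, hpt⟩ := pt
      constructor
      · simp [hpt, Finset.sum_add_distrib, Finset.sum_ite_eq']
      · intro t
        rw [hpt t]
        by_cases h1 : t = a <;> by_cases h2 : t = b
        · exact absurd (h1.symm.trans h2) hab
        · simp [h1, h2, hab]
        · simp [h1, h2, Ne.symm hab]
        · simp [h1, h2]
    have hinj : Function.Injective (fun i => C (f i)) := by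
      intro i j hCij
      by_contra hne
      exact hC (f i) (f j) (hsum i) (hsum j) (main i j hne) hCij
    have := Fintype.card_le_of_injective _ hinj
    simpa using this
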